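/- Let M be an invertible (d+1)×(d+1) real matrix and let v′ ∈ ℝ^{d+1} with h(v′) = 1 and h(Mv′) ≠ 0; set v = Mv′ / h(Mv′). Then there is a well-defined linear endomorphism N of the d-dimensional hyperplane P determined by N(π_{v′}(z)) = π_v(Mz) for all z ∈ ℝ^{d+1}, and its determinant (as an endomorphism of P) satisfies det(N) = det(M) / h(Mv′). -/

import Mathlib

/-- The hyperplane `P = {z ∈ ℝ^{d+1} | h(z) = 0}` as a submodule of `ℝ^{d+1}`. -/
noncomputable def PSub (d : ℕ) : Submodule ℝ (Fin (d + 1) → ℝ) :=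
  LinearMap.ker (∑ i, LinearMap.proj i : (Fin (d + 1) → ℝ) →ₗ[ℝ] ℝ)

/-- `piProj y z = z - (h(z)/h(y)) • y`, the projection of `ℝ^{d+1}` onto `P` along `y`. -/
noncomputable def piProj {d : ℕ} (y z : Fin (d + 1) → ℝ) : Fin (d + 1) → ℝ :=
  z - ((∑ i, z i) / (∑ i, y i)) • y

noncomputable def hLin (d : ℕ) : (Fin (d + 1) → ℝ) →ₗ[ℝ] ℝ :=
  ∑ i, LinearMap.proj i

@[simp] lemma hLin_apply {d : ℕ} (z : Fin (d + 1) → ℝ) : hLin d z = ∑ i, z i := by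
  simp [hLin]

lemma mem_PSub {d : ℕ} {z : Fin (d + 1) → ℝ} : z ∈ PSub d ↔ ∑ i, z i = 0 := by
  simp [PSub, LinearMap.mem_ker]

section Aux
variable {d : ℕ} (M : Matrix (Fin (d + 1)) (Fin (d + 1)) ℝ) (v' : Fin (d + 1) → ℝ)

/-- The full-space endomorphism `S z = M z + (h z - h (M z)) • v`. -/
noncomputable def SMap : (Fin (d + 1) → ℝ) →ₗ[ℝ] (Fin (d + 1) → ℝ) :=
  Matrix.toLin' M +
    (hLin d - (hLin d) ∘ₗ Matrix.toLin' M).smulRight ((∑ i, (M.mulVec v') i)⁻¹ • M.mulVec v')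

lemma SMap_apply (z : Fin (d + 1) → ℝ) :
    SMap M v' z = M.mulVec z +
      ((∑ i, z i) - ∑ i, (M.mulVec z) i) • ((∑ i, (M.mulVec v') i)⁻¹ • M.mulVec v') := by
  simp [SMap, Matrix.toLin'_apply]

variable (hMv' : (∑ i, (M.mulVec v') i) ≠ 0)

lemma sum_v (hMv' : (∑ i, (M.mulVec v') i) ≠ 0) :
    ∑ i, ((∑ i, (M.mulVec v') i)⁻¹ • M.mulVec v') i = 1 := by
  simp [← Finset.mul_sum, inv_mul_cancel₀ hMv']

lemma sum_SMap (hMv' : (∑ i, (M.mulVec v') i) ≠ 0) (z : Fin (d + 1) → ℝ) :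
    ∑ i, (SMap M v' z) i = ∑ i, z i := by
  simp only [SMap_apply, Pi.add_apply, Pi.smul_apply, smul_eq_mul]
  rw [Finset.sum_add_distrib, ← Finset.mul_sum,
    show ∑ i, (∑ i, (M.mulVec v') i)⁻¹ * (M.mulVec v') i = 1 from by
      rw [← Finset.mul_sum]; exact inv_mul_cancel₀ hMv']
  ring

lemma SMap_mem (hMv' : (∑ i, (M.mulVec v') i) ≠ 0) :
    ∀ p ∈ PSub d, SMap M v' p ∈ PSub d := by
  intro p hp
  rw [mem_PSub] at hp ⊢
  rw [sum_SMap M v' hMv', hp]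

/-- The induced endomorphism of the hyperplane. -/
noncomputable def NMap (hMv' : (∑ i, (M.mulVec v') i) ≠ 0) : PSub d →ₗ[ℝ] PSub d :=
  (SMap M v').restrict (SMap_mem M v' hMv')

lemma Mv'_eq (hMv' : (∑ i, (M.mulVec v') i) ≠ 0) :
    M.mulVec v' = (∑ i, (M.mulVec v') i) • ((∑ i, (M.mulVec v') i)⁻¹ • M.mulVec v') := by
  rw [smul_smul, mul_inv_cancel₀ hMv', one_smul]

lemma vec_aux {V : Type*} [AddCommGroup V] [Module ℝ V] (c s t : ℝ) (hc : c ≠ 0)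
    (mz mv : V) :
    mz - s • mv + ((0 : ℝ) - (t - s * c)) • (c⁻¹ • mv) = mz - (t / 1) • (c⁻¹ • mv) := by
  have h : (0 - (t - s * c)) * c⁻¹ = s - t * c⁻¹ := by field_simp; ring
  rw [div_one, smul_smul, smul_smul, h]
  module

lemma NMap_key (hv' : (∑ i, v' i) = 1) (hMv' : (∑ i, (M.mulVec v') i) ≠ 0)
    (p : PSub d) (z : Fin (d + 1) → ℝ) (hz : piProj v' z = (p : Fin (d + 1) → ℝ)) :
    ((NMap M v' hMv' p : PSub d) : Fin (d + 1) → ℝ) =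
      piProj ((∑ i, (M.mulVec v') i)⁻¹ • M.mulVec v') (M.mulVec z) := by
  have hp0 : ∑ i, (p : Fin (d + 1) → ℝ) i = 0 := mem_PSub.mp p.2
  have hpz : (p : Fin (d + 1) → ℝ) = z - (∑ i, z i) • v' := by
    rw [← hz]; simp [piProj, hv']
  have hcoe : ((NMap M v' hMv' p : PSub d) : Fin (d + 1) → ℝ)
      = SMap M v' (p : Fin (d + 1) → ℝ) := rfl
  have hsv : ∑ i, ((∑ i, (M.mulVec v') i)⁻¹ • M.mulVec v') i = 1 := sum_v M v' hMv'
  rw [hcoe, SMap_apply, hp0, hpz]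
  have hMp : M.mulVec (z - (∑ i, z i) • v') = M.mulVec z - (∑ i, z i) • M.mulVec v' := by
    rw [Matrix.mulVec_sub, Matrix.mulVec_smul]
  have hsum : ∑ i, (M.mulVec z - (∑ i, z i) • M.mulVec v') i
      = (∑ i, (M.mulVec z) i) - (∑ i, z i) * (∑ i, (M.mulVec v') i) := by
    simp [Finset.sum_sub_distrib, ← Finset.mul_sum]
  rw [hMp, hsum, piProj, hsv]
  exact vec_aux _ _ _ hMv' _ _

lemma piProj_self (hv' : (∑ i, v' i) = 1) (p : PSub d) :
    piProj v' (p : Fin (d + 1) → ℝ) = (p : Fin (d + 1) → ℝ) := by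
  have hp0 : ∑ i, (p : Fin (d + 1) → ℝ) i = 0 := mem_PSub.mp p.2
  simp [piProj, hp0]

lemma NMap_unique (hv' : (∑ i, v' i) = 1) (hMv' : (∑ i, (M.mulVec v') i) ≠ 0)
    (N : PSub d →ₗ[ℝ] PSub d)
    (hN : ∀ (p : PSub d) (z : Fin (d + 1) → ℝ),
      piProj v' z = (p : Fin (d + 1) → ℝ) →
      ((N p : PSub d) : Fin (d + 1) → ℝ) =
        piProj ((∑ i, (M.mulVec v') i)⁻¹ • M.mulVec v') (M.mulVec z)) :
    N = NMap M v' hMv' := by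
  apply LinearMap.ext; intro p
  apply Subtype.ext
  rw [hN p p (piProj_self v' hv' p), ← NMap_key M v' hv' hMv' p p (piProj_self v' hv' p)]

lemma ldot (z : Fin (d + 1) → ℝ) :
    dotProduct (fun j => 1 - ∑ i, M i j) z = ∑ i, z i - ∑ i, (M.mulVec z) i := by
  simp only [dotProduct, Matrix.mulVec, sub_mul, one_mul, Finset.sum_sub_distrib]
  congr 1
  rw [Finset.sum_comm]
  simp [Finset.sum_mul]

lemma colrow_mulVec (u l z : Fin (d + 1) → ℝ) :
    (Matrix.replicateCol Unit u * Matrix.replicateRow Unit l).mulVec z = (dotProduct l z) • u := by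
  rw [← Matrix.mulVec_mulVec]
  funext i
  simp [Matrix.mulVec, dotProduct, mul_comm]

lemma row_mul_mul_col (l u : Fin (d + 1) → ℝ) (B : Matrix (Fin (d + 1)) (Fin (d + 1)) ℝ) :
    (Matrix.replicateRow Unit l * B * Matrix.replicateCol Unit u) default default
      = dotProduct l (B.mulVec u) := by
  simp only [Matrix.mul_apply, dotProduct, Matrix.mulVec, Matrix.replicateRow_apply,
    Matrix.replicateCol_apply, Finset.univ_unique, Finset.sum_singleton, Finset.sum_mul, Finset.mul_sum,
    mul_assoc]
  exact Finset.sum_comm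

lemma SMap_toLin :
    SMap M v' = Matrix.toLin' (M + Matrix.replicateCol Unit ((∑ i, (M.mulVec v') i)⁻¹ • M.mulVec v')
      * Matrix.replicateRow Unit (fun j => 1 - ∑ i, M i j)) := by
  apply LinearMap.ext; intro z
  rw [SMap_apply, Matrix.toLin'_apply, Matrix.add_mulVec, colrow_mulVec, ldot]

lemma det_SMap (hv' : (∑ i, v' i) = 1) (hMv' : (∑ i, (M.mulVec v') i) ≠ 0)
    (hM : IsUnit M.det) :
    LinearMap.det (SMap M v') = M.det * (∑ i, (M.mulVec v') i)⁻¹ := by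
  rw [SMap_toLin, LinearMap.det_toLin']
  rw [Matrix.det_add_replicateCol_mul_replicateRow hM]
  congr 1
  rw [Matrix.det_unique]
  have hinv : M⁻¹.mulVec ((∑ i, (M.mulVec v') i)⁻¹ • M.mulVec v')
      = (∑ i, (M.mulVec v') i)⁻¹ • v' := by
    rw [Matrix.mulVec_smul, Matrix.mulVec_mulVec, Matrix.nonsing_inv_mul M hM,
      Matrix.one_mulVec]
  rw [Matrix.add_apply, Matrix.one_apply_eq, row_mul_mul_col, hinv, ldot]
  have h1 : ∑ i, ((∑ i, (M.mulVec v') i)⁻¹ • v') i = (∑ i, (M.mulVec v') i)⁻¹ := by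
    simp [← Finset.mul_sum, hv']
  have h2 : ∑ i, (M.mulVec ((∑ i, (M.mulVec v') i)⁻¹ • v')) i = 1 := by
    rw [Matrix.mulVec_smul]
    exact sum_v M v' hMv'
  rw [h1, h2]
  ring

lemma vec_aux2 {V : Type*} [AddCommGroup V] [Module ℝ V] (c : ℝ) (hc : c ≠ 0) (w : V) :
    w + (1 - c) • (c⁻¹ • w) = c⁻¹ • w := by
  rw [smul_smul]
  have h : (1 - c) * c⁻¹ = c⁻¹ - 1 := by field_simp
  rw [h]
  module

lemma SMap_v' (hv' : (∑ i, v' i) = 1) (hMv' : (∑ i, (M.mulVec v') i) ≠ 0) :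
    SMap M v' v' = (∑ i, (M.mulVec v') i)⁻¹ • M.mulVec v' := by
  rw [SMap_apply, hv']
  exact vec_aux2 _ hMv' _

/-- Projection onto the hyperplane along `v'`, as a map into the submodule. -/
noncomputable def projP (hv' : (∑ i, v' i) = 1) : (Fin (d + 1) → ℝ) →ₗ[ℝ] PSub d :=
  LinearMap.codRestrict (PSub d) (LinearMap.id - (hLin d).smulRight v') (fun z => by
    rw [mem_PSub]
    simp [Finset.sum_sub_distrib, ← Finset.mul_sum, hv'])

lemma projP_coe (hv' : (∑ i, v' i) = 1) (z : Fin (d + 1) → ℝ) :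
    (projP v' hv' z : Fin (d + 1) → ℝ) = z - (∑ i, z i) • v' := by
  simp [projP]

/-- The splitting `P × ℝ ≃ ℝ^{d+1}`, `(p, t) ↦ p + t • v'`. -/
noncomputable def eEquiv (hv' : (∑ i, v' i) = 1) :
    (PSub d × ℝ) ≃ₗ[ℝ] (Fin (d + 1) → ℝ) :=
  LinearEquiv.ofLinear ((PSub d).subtype.coprod (LinearMap.toSpanSingleton ℝ _ v'))
    ((projP v' hv').prod (hLin d))
    (by
      apply LinearMap.ext; intro z
      simp only [LinearMap.coe_comp, Function.comp_apply, LinearMap.prod_apply, Function.prod,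
        LinearMap.coprod_apply, Submodule.coe_subtype, LinearMap.toSpanSingleton_apply,
        LinearMap.id_coe, id_eq, hLin_apply]
      rw [projP_coe v' hv']
      module)
    (by
      apply LinearMap.ext; intro x
      have hx0 : ∑ i, (x.1 : Fin (d + 1) → ℝ) i = 0 := mem_PSub.mp x.1.2
      have hsum : ∑ i, ((x.1 : Fin (d + 1) → ℝ) + x.2 • v') i = x.2 := by
        simp [Finset.sum_add_distrib, hx0, ← Finset.mul_sum, hv']
      refine Prod.ext (Subtype.ext ?_) ?_
      · simp only [LinearMap.coe_comp, Function.comp_apply, LinearMap.prod_apply, Function.prod,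
          LinearMap.coprod_apply, Submodule.coe_subtype, LinearMap.toSpanSingleton_apply,
          LinearMap.id_coe, id_eq]
        rw [projP_coe v' hv', hsum]
        module
      · simp only [LinearMap.coe_comp, Function.comp_apply, LinearMap.prod_apply, Function.prod,
          LinearMap.coprod_apply, Submodule.coe_subtype, LinearMap.toSpanSingleton_apply,
          LinearMap.id_coe, id_eq, hLin_apply]
        exact hsum)

lemma eEquiv_apply (hv' : (∑ i, v' i) = 1) (x : PSub d × ℝ) :
    eEquiv v' hv' x = (x.1 : Fin (d + 1) → ℝ) + x.2 • v' := by
  simp [eEquiv, LinearMap.coprod_apply, LinearMap.toSpanSingleton_apply]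

lemma eEquiv_symm_apply (hv' : (∑ i, v' i) = 1) (z : Fin (d + 1) → ℝ) :
    (eEquiv v' hv').symm z = (projP v' hv' z, ∑ i, z i) := by
  simp [eEquiv, LinearMap.prod_apply]

lemma det_NMap (hv' : (∑ i, v' i) = 1) (hMv' : (∑ i, (M.mulVec v') i) ≠ 0) :
    LinearMap.det (NMap M v' hMv') = LinearMap.det (SMap M v') := by
  classical
  set T : (PSub d × ℝ) →ₗ[ℝ] (PSub d × ℝ) :=
    ((eEquiv v' hv').symm : (Fin (d + 1) → ℝ) →ₗ[ℝ] (PSub d × ℝ)) ∘ₗ SMap M v' ∘ₗ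
      ((eEquiv v' hv') : (PSub d × ℝ) →ₗ[ℝ] (Fin (d + 1) → ℝ)) with hT
  have hdetT : LinearMap.det T = LinearMap.det (SMap M v') := by
    rw [hT]
    have h := LinearMap.det_conj (SMap M v') (eEquiv v' hv').symm
    rw [LinearEquiv.symm_symm] at h
    exact h
  rw [← hdetT]
  have hTinl : ∀ p : PSub d, T (p, 0) = (NMap M v' hMv' p, 0) := by
    intro p
    have hp0 : ∑ i, (p : Fin (d + 1) → ℝ) i = 0 := mem_PSub.mp p.2
    have h1 : eEquiv v' hv' (p, 0) = (p : Fin (d + 1) → ℝ) := by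
      rw [eEquiv_apply]; simp
    have hSsum : ∑ i, (SMap M v' (p : Fin (d + 1) → ℝ)) i = 0 := by
      rw [sum_SMap M v' hMv', hp0]
    have h2 : (NMap M v' hMv' p : Fin (d + 1) → ℝ)
        = SMap M v' (p : Fin (d + 1) → ℝ) := rfl
    rw [hT]
    simp only [LinearMap.coe_comp, Function.comp_apply, LinearEquiv.coe_coe]
    rw [h1, eEquiv_symm_apply v' hv', hSsum]
    refine Prod.ext (Subtype.ext ?_) rfl
    rw [projP_coe v' hv', hSsum, ← h2]
    simp
  have hTinr : T (0, 1) = (projP v' hv' ((∑ i, (M.mulVec v') i)⁻¹ • M.mulVec v'), 1) := by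
    have h1 : eEquiv v' hv' ((0 : PSub d), (1 : ℝ)) = v' := by
      rw [eEquiv_apply]; simp
    rw [hT]
    simp only [LinearMap.coe_comp, Function.comp_apply, LinearEquiv.coe_coe]
    rw [h1, SMap_v' M v' hv' hMv', eEquiv_symm_apply v' hv', sum_v M v' hMv']
  set b := Module.finBasis ℝ (PSub d) with hb
  set B := b.prod (Module.Basis.singleton Unit ℝ) with hB
  have hBinl : ∀ k, B (Sum.inl k) = (b k, 0) := by
    intro k; rw [hB]; simp [Module.Basis.prod_apply]
  have hBinr : ∀ k : Unit, B (Sum.inr k) = (0, 1) := by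
    intro k; rw [hB]; simp [Module.Basis.prod_apply, Module.Basis.singleton_apply]
  rw [← LinearMap.det_toMatrix B T, ← LinearMap.det_toMatrix b (NMap M v' hMv')]
  have hmat : LinearMap.toMatrix B B T =
      Matrix.fromBlocks (LinearMap.toMatrix b b (NMap M v' hMv'))
        (Matrix.of fun i _ =>
          b.repr (projP v' hv' ((∑ i, (M.mulVec v') i)⁻¹ • M.mulVec v')) i) 0 1 := by
    ext i j
    rcases i with i | i <;> rcases j with k | k
    · rw [Matrix.fromBlocks_apply₁₁, LinearMap.toMatrix_apply, LinearMap.toMatrix_apply,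
        hBinl k, hTinl (b k), hB, Module.Basis.prod_repr_inl]
    · rw [Matrix.fromBlocks_apply₁₂, LinearMap.toMatrix_apply, hBinr k, hTinr, hB,
        Module.Basis.prod_repr_inl]
      simp
    · rw [Matrix.fromBlocks_apply₂₁, LinearMap.toMatrix_apply, hBinl k, hTinl (b k), hB,
        Module.Basis.prod_repr_inr]
      simp
    · rw [Matrix.fromBlocks_apply₂₂, LinearMap.toMatrix_apply, hBinr k, hTinr, hB,
        Module.Basis.prod_repr_inr]
      simp [Module.Basis.singleton_repr, Matrix.one_apply]
  rw [hmat, Matrix.det_fromBlocks_zero₂₁, Matrix.det_one, mul_one]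

end Aux

/-- There is a unique linear endomorphism `N` of the hyperplane `P` with
`N ∘ π_{v'} = π_v ∘ M` (where `v = M v' / h(M v')`), and its determinant as an
endomorphism of `P` is `det M / h(M v')`. -/
theorem induced_endomorphism_det {d : ℕ} (hd : 1 ≤ d)
    (M : Matrix (Fin (d + 1)) (Fin (d + 1)) ℝ) (hM : IsUnit M.det)
    (v' : Fin (d + 1) → ℝ) (hv' : (∑ i, v' i) = 1)
    (hMv' : (∑ i, (M.mulVec v') i) ≠ 0) :
    (∃! N : PSub d →ₗ[ℝ] PSub d,
      ∀ (p : PSub d) (z : Fin (d + 1) → ℝ),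
        piProj v' z = (p : Fin (d + 1) → ℝ) →
        ((N p : PSub d) : Fin (d + 1) → ℝ) =
          piProj ((∑ i, (M.mulVec v') i)⁻¹ • M.mulVec v') (M.mulVec z)) ∧
    (∀ N : PSub d →ₗ[ℝ] PSub d,
      (∀ (p : PSub d) (z : Fin (d + 1) → ℝ),
        piProj v' z = (p : Fin (d + 1) → ℝ) →
        ((N p : PSub d) : Fin (d + 1) → ℝ) =
          piProj ((∑ i, (M.mulVec v') i)⁻¹ • M.mulVec v') (M.mulVec z)) →
      LinearMap.det N = M.det / (∑ i, (M.mulVec v') i)) := by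
  refine ⟨⟨NMap M v' hMv', NMap_key M v' hv' hMv',
    fun N hN => NMap_unique M v' hv' hMv' N hN⟩, ?_⟩
  intro N hN
  rw [NMap_unique M v' hv' hMv' N hN, det_NMap M v' hv' hMv',
    det_SMap M v' hv' hMv' hM, div_eq_mul_inv]
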